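/- Let G be a compact, Hausdorff, totally disconnected topological group and α a topological group automorphism of G. Then the sets con(α) = { x ∈ G : α^n(x) → 1 as n → +∞ } and bcg(α) = con(α) ∩ con(α⁻¹) are normal subgroups of G, and nub(α) is a normal subgroup of G. -/

import Mathlib

open Pointwise Filter Topology

variable {G : Type*}

/-- `V₊ = ⋂_{k ≥ 0} α^k(V)`. -/
def plusPart [Group G] (α : MulAut G) (V : Set G) : Set G :=
  ⋂ k : ℕ, ⇑(α ^ k) '' V

/-- `V₋ = ⋂_{k ≥ 0} α^{-k}(V)`. -/
def minusPart [Group G] (α : MulAut G) (V : Set G) : Set G :=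
  ⋂ k : ℕ, ⇑(α⁻¹ ^ k) '' V

/-- `V` is tidy above for `α` if `V = V₊V₋`. -/
def TidyAbove [Group G] (α : MulAut G) (V : Set G) : Prop :=
  V = plusPart α V * minusPart α V

/-- `V` is tidy below for `α` if `V₊₊` and `V₋₋` are closed. -/
def TidyBelow [Group G] [TopologicalSpace G] (α : MulAut G) (V : Set G) : Prop :=
  IsClosed (⋃ k : ℕ, ⇑(α ^ k) '' plusPart α V) ∧
  IsClosed (⋃ k : ℕ, ⇑(α⁻¹ ^ k) '' minusPart α V)

/-- `V` is tidy for `α` if it is tidy above and tidy below. -/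
def Tidy [Group G] [TopologicalSpace G] (α : MulAut G) (V : Set G) : Prop :=
  TidyAbove α V ∧ TidyBelow α V

/-- The nub of `α`: the intersection of all compact open subgroups tidy for `α`. -/
def nub [Group G] [TopologicalSpace G] (α : MulAut G) : Subgroup G :=
  ⨅ V ∈ {V : Subgroup G | IsCompact (V : Set G) ∧ IsOpen (V : Set G) ∧ Tidy α (V : Set G)}, V

/-- The contraction group `con(α) = { x | α^n(x) → 1 as n → ∞ }`. -/
def conSet [Group G] [TopologicalSpace G] (α : MulAut G) : Set G :=
  {x : G | Tendsto (fun n : ℕ => (α ^ n) x) atTop (𝓝 1)}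

/-- The homoclinic (two-sided contraction) group `bcg(α) = con(α) ∩ con(α⁻¹)`. -/
def bcgSet [Group G] [TopologicalSpace G] (α : MulAut G) : Set G :=
  conSet α ∩ conSet α⁻¹

/-- The bounded contraction group `bcon(α)`. -/
def bconSet [Group G] [TopologicalSpace G] (α : MulAut G) : Set G :=
  {x ∈ conSet α | IsCompact (closure (Set.range fun n : ℕ => (α⁻¹ ^ n) x))}

/-- Image of a subgroup under an automorphism. -/
def mapAut [Group G] (α : MulAut G) (V : Subgroup G) : Subgroup G where
  carrier := ⇑α '' (V : Set G)
  one_mem' := ⟨1, V.one_mem, map_one α⟩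
  mul_mem' := by
    rintro a b ⟨a', ha, rfl⟩ ⟨b', hb, rfl⟩
    exact ⟨a' * b', V.mul_mem ha hb, map_mul α a' b'⟩
  inv_mem' := by
    rintro a ⟨a', ha, rfl⟩
    exact ⟨a'⁻¹, V.inv_mem ha, map_inv α a'⟩

/-- `V₊` as a subgroup. -/
def plusSub [Group G] (α : MulAut G) (V : Subgroup G) : Subgroup G :=
  ⨅ k : ℕ, mapAut (α ^ k) V

/-- `V₋` as a subgroup. -/
def minusSub [Group G] (α : MulAut G) (V : Subgroup G) : Subgroup G :=
  ⨅ k : ℕ, mapAut (α⁻¹ ^ k) V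

/-- The shift automorphism of `F^ℤ`. -/
def shiftAut (F : Type*) [Group F] : MulAut (ℤ → F) where
  toFun f := fun n => f (n + 1)
  invFun f := fun n => f (n - 1)
  left_inv f := by funext n; show f (n - 1 + 1) = f n; congr 1; omega
  right_inv f := by funext n; show f (n + 1 - 1) = f n; congr 1; omega
  map_mul' f g := rfl

section Aux

variable [Group G] [TopologicalSpace G] [IsTopologicalGroup G]

lemma mulAut_continuous_pow (β : MulAut G) (hβ : Continuous ⇑β) (k : ℕ) :
    Continuous ⇑(β ^ k) := by
  induction k with
  | zero =>
    have : ⇑(β ^ 0) = id := by funext x; simp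
    rw [this]; exact continuous_id
  | succ n ih =>
    have : ⇑(β ^ (n + 1)) = ⇑(β ^ n) ∘ ⇑β := by
      funext x; simp [pow_succ, MulAut.mul_apply]
    rw [this]; exact ih.comp hβ

lemma mulAut_image_pow_succ (β : MulAut G) (k : ℕ) (s : Set G) :
    ⇑(β ^ (k + 1)) '' s = ⇑(β ^ k) '' (⇑β '' s) := by
  have h : ⇑(β ^ (k + 1)) = ⇑(β ^ k) ∘ ⇑β := by
    funext x; simp [pow_succ, MulAut.mul_apply]
  rw [h, Set.image_comp]

lemma mulAut_image_pow_succ' (β : MulAut G) (k : ℕ) (s : Set G) :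
    ⇑(β ^ (k + 1)) '' s = ⇑β '' (⇑(β ^ k) '' s) := by
  have h : ⇑(β ^ (k + 1)) = ⇑β ∘ ⇑(β ^ k) := by
    funext x; simp [pow_succ', MulAut.mul_apply]
  rw [h, Set.image_comp]

/-- The key Baire-category stabilization lemma: if `P` is a closed subgroup of a compact
group with `P ⊆ β(P)` and `⋃ₖ βᵏ(P)` closed, then `β(P) = P`. -/
lemma image_stab [T2Space G] [CompactSpace G]
    (β : MulAut G) (hβ : Continuous ⇑β)
    (P : Subgroup G) (hPc : IsClosed (P : Set G))
    (hmono : (P : Set G) ⊆ ⇑β '' P)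
    (hcl : IsClosed (⋃ k : ℕ, ⇑(β ^ k) '' (P : Set G))) :
    ⇑β '' (P : Set G) = P := by
  classical
  set Q : ℕ → Subgroup G := fun k => mapAut (β ^ k) P with hQdef
  have hQcoe : ∀ k, (Q k : Set G) = ⇑(β ^ k) '' (P : Set G) := fun k => rfl
  have hQsub : ∀ k, (Q k : Set G) ⊆ Q (k + 1) := by
    intro k
    rw [hQcoe, hQcoe, mulAut_image_pow_succ]
    exact Set.image_mono hmono
  have hQmono : Monotone Q := monotone_nat_of_le_succ fun k => hQsub k
  have hQclosed : ∀ k, IsClosed ((Q k : Set G)) := by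
    intro k
    rw [hQcoe]
    exact ((hPc.isCompact).image (mulAut_continuous_pow β hβ k)).isClosed
  -- The union as a subgroup
  set H : Subgroup G := ⨆ k, Q k with hHdef
  have hHcoe : (H : Set G) = ⋃ k, (Q k : Set G) :=
    Subgroup.coe_iSup_of_directed hQmono.directed_le
  have hHcl : IsClosed (H : Set G) := by rw [hHcoe]; exact hcl
  have hHcp : IsCompact (H : Set G) := hHcl.isCompact
  have hQleH : ∀ k, Q k ≤ H := fun k => le_iSup Q k
  -- Baire category on the subtype
  haveI : CompactSpace (H : Set G) := isCompact_iff_compactSpace.mp hHcp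
  haveI : Nonempty (H : Set G) := ⟨⟨1, H.one_mem⟩⟩
  have hfc : ∀ k : ℕ, IsClosed ((Subtype.val ⁻¹' (Q k : Set G)) : Set (H : Set G)) :=
    fun k => (hQclosed k).preimage continuous_subtype_val
  have hfU : ⋃ k : ℕ, ((Subtype.val ⁻¹' (Q k : Set G)) : Set (H : Set G)) = Set.univ := by
    apply Set.eq_univ_iff_forall.mpr
    intro x
    have hx : (x : G) ∈ ⋃ k, (Q k : Set G) := by rw [← hHcoe]; exact x.2
    obtain ⟨k, hk⟩ := Set.mem_iUnion.mp hx
    exact Set.mem_iUnion.mpr ⟨k, hk⟩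
  obtain ⟨k, hk⟩ := nonempty_interior_of_iUnion_of_closed hfc hfU
  obtain ⟨x, hxint⟩ := hk
  obtain ⟨U, hUopen, hUeq⟩ := isOpen_induced_iff.mp (isOpen_interior :
    IsOpen (interior ((Subtype.val ⁻¹' (Q k : Set G)) : Set (H : Set G))))
  have hxU : (x : G) ∈ U := by rw [← hUeq] at hxint; exact hxint
  have hUQ : ∀ z : G, z ∈ (H : Set G) → z ∈ U → z ∈ (Q k : Set G) := by
    intro z hz hzU
    have h1 : (⟨z, hz⟩ : (H : Set G)) ∈ interior ((Subtype.val ⁻¹' (Q k : Set G))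
        : Set (H : Set G)) := by rw [← hUeq]; exact hzU
    have h2 : (⟨z, hz⟩ : (H : Set G)) ∈ (Subtype.val ⁻¹' (Q k : Set G) : Set (H : Set G)) :=
      interior_subset h1
    exact h2
  have hx0Q : (x : G) ∈ (Q k : Set G) := hUQ _ x.2 hxU
  set x0 : G := (x : G) with hx0def
  have hx0H : x0 ∈ H := x.2
  -- finite cover of H by translates of U
  have hcover : (H : Set G) ⊆ ⋃ y : (H : Set G), ((y : G) * x0⁻¹) • U := by
    intro z hz
    refine Set.mem_iUnion.mpr ⟨⟨z, hz⟩, ?_⟩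
    rw [Set.mem_smul_set_iff_inv_smul_mem]
    simpa [smul_eq_mul, mul_assoc] using hxU
  obtain ⟨t, ht⟩ := hHcp.elim_finite_subcover
    (fun y : (H : Set G) => ((y : G) * x0⁻¹) • U)
    (fun y => hUopen.smul _) hcover
  -- each translate meets H inside a coset of Q k
  have hcoset : ∀ (y : (H : Set G)) (z : G), z ∈ (H : Set G) →
      z ∈ ((y : G) * x0⁻¹) • U → ((y : G) * x0⁻¹)⁻¹ * z ∈ (Q k : Set G) := by
    intro y z hz hzU
    rw [Set.mem_smul_set_iff_inv_smul_mem, smul_eq_mul] at hzU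
    apply hUQ
    · exact H.mul_mem (H.inv_mem (H.mul_mem y.2 (H.inv_mem hx0H))) hz
    · exact hzU
  -- suppose the chain never stabilizes
  by_contra hne
  have hne' : ∀ j : ℕ, ∃ a : G, a ∈ (Q (j + 1) : Set G) ∧ a ∉ (Q j : Set G) := by
    intro j
    by_contra hc
    push_neg at hc
    apply hne
    have heq : (Q (j + 1) : Set G) = (Q j : Set G) :=
      Set.Subset.antisymm (fun a ha => hc a ha) (hQsub j)
    have hinj : Function.Injective ⇑(β ^ j) := (β ^ j).injective
    have himg : ⇑(β ^ j) '' (⇑β '' (P : Set G)) = ⇑(β ^ j) '' (P : Set G) := by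
      rw [← mulAut_image_pow_succ, ← hQcoe, ← hQcoe, heq]
    exact Set.image_injective.mpr hinj himg
  choose a haQ haN using hne'
  -- the elements a (m + k) lie in pairwise distinct cosets of Q k, contradiction
  set b : ℕ → G := fun m => a (m + k) with hbdef
  have hbQ : ∀ m, b m ∈ (Q (m + k + 1) : Set G) := fun m => haQ (m + k)
  have hbN : ∀ m, b m ∉ (Q (m + k) : Set G) := fun m => haN (m + k)
  have hbH : ∀ m, b m ∈ (H : Set G) := fun m => hQleH (m + k + 1) (hbQ m)
  have hbC : ∀ m, ∃ y : (H : Set G), y ∈ t ∧ b m ∈ ((y : G) * x0⁻¹) • U := by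
    intro m
    have := ht (hbH m)
    simp only [Set.mem_iUnion] at this
    obtain ⟨y, hyt, hy⟩ := this
    exact ⟨y, hyt, hy⟩
  choose y hyt hyU using hbC
  have hpair : ∃ m m' : ℕ, m ≠ m' ∧ y m = y m' := by
    obtain ⟨m, m', hne2, heq2⟩ := Finite.exists_ne_map_eq_of_infinite
      (fun m => (⟨y m, hyt m⟩ : {v // v ∈ t}))
    exact ⟨m, m', hne2, congrArg Subtype.val heq2⟩
  -- a symmetric helper
  have key : ∀ m m' : ℕ, m < m' → y m = y m' → False := by
    intro m m' hlt hyy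
    have h1 : ((y m : G) * x0⁻¹)⁻¹ * b m ∈ (Q k : Set G) :=
      hcoset (y m) (b m) (hbH m) (hyU m)
    have h2 : ((y m : G) * x0⁻¹)⁻¹ * b m' ∈ (Q k : Set G) := by
      rw [hyy]; exact hcoset (y m') (b m') (hbH m') (hyU m')
    have h3 : (b m)⁻¹ * b m' ∈ (Q k : Set G) := by
      have := (Q k).mul_mem ((Q k).inv_mem h1) h2
      simpa [mul_assoc] using this
    refine hbN m' ?_
    have h4 : b m ∈ (Q (m' + k) : Set G) :=
      hQmono (by omega : m + k + 1 ≤ m' + k) (hbQ m)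
    have h5 : (b m)⁻¹ * b m' ∈ (Q (m' + k) : Set G) :=
      hQmono (by omega : k ≤ m' + k) h3
    have := (Q (m' + k)).mul_mem h4 h5
    simpa using this
  obtain ⟨m, m', hmm, hyy⟩ := hpair
  rcases hmm.lt_or_gt with hlt | hlt
  · exact key m m' hlt hyy
  · exact key m' m hlt hyy.symm

end Aux

lemma plusPart_subset_image [Group G] (α : MulAut G) (V : Set G) :
    plusPart α V ⊆ ⇑α '' plusPart α V := by
  intro x hx
  refine ⟨α⁻¹ x, ?_, MulAut.apply_inv_self G α x⟩
  refine Set.mem_iInter.mpr fun k => ?_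
  have hx' : x ∈ ⇑(α ^ (k + 1)) '' V := Set.mem_iInter.mp hx (k + 1)
  obtain ⟨v, hv, hvx⟩ := hx'
  refine ⟨v, hv, ?_⟩
  have : α ((α ^ k) v) = (α ^ (k + 1)) v := by
    rw [pow_succ']; rfl
  rw [← hvx, ← this, MulAut.inv_apply_self]

section Stable

variable [Group G] [TopologicalSpace G] [IsTopologicalGroup G] [T2Space G] [CompactSpace G]

lemma coe_plusSub (α : MulAut G) (V : Subgroup G) :
    ((plusSub α V : Subgroup G) : Set G) = plusPart α (V : Set G) := by
  rw [plusSub, Subgroup.coe_iInf]; rfl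

/-- In a compact group, a subgroup tidy for `α` is `α`-stable. -/
lemma tidy_image_eq (α : MulAut G) (hαc : Continuous ⇑α) (hαc' : Continuous ⇑(α⁻¹))
    (V : Subgroup G) (hVc : IsCompact (V : Set G)) (ht : Tidy α (V : Set G)) :
    ⇑α '' (V : Set G) = V := by
  have hplusclosed : ∀ (β : MulAut G), Continuous ⇑β →
      IsClosed (plusPart β (V : Set G)) := by
    intro β hβ
    exact isClosed_iInter fun k => (hVc.image (mulAut_continuous_pow β hβ k)).isClosed
  have hplus : ⇑α '' plusPart α (V : Set G) = plusPart α (V : Set G) := by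
    have := image_stab α hαc (plusSub α V)
      (by rw [coe_plusSub]; exact hplusclosed α hαc)
      (by rw [coe_plusSub]; exact plusPart_subset_image α V)
      (by
        have h2 := ht.2.1
        have : (⋃ k : ℕ, ⇑(α ^ k) '' ((plusSub α V : Subgroup G) : Set G))
            = ⋃ k : ℕ, ⇑(α ^ k) '' plusPart α (V : Set G) := by rw [coe_plusSub]
        rw [this]; exact h2)
    rwa [coe_plusSub] at this
  have hminus' : ⇑α⁻¹ '' plusPart α⁻¹ (V : Set G) = plusPart α⁻¹ (V : Set G) := by
    have := image_stab α⁻¹ hαc' (plusSub α⁻¹ V)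
      (by rw [coe_plusSub]; exact hplusclosed α⁻¹ hαc')
      (by rw [coe_plusSub]; exact plusPart_subset_image α⁻¹ V)
      (by
        have h2 := ht.2.2
        have : (⋃ k : ℕ, ⇑(α⁻¹ ^ k) '' ((plusSub α⁻¹ V : Subgroup G) : Set G))
            = ⋃ k : ℕ, ⇑(α⁻¹ ^ k) '' plusPart α⁻¹ (V : Set G) := by rw [coe_plusSub]
        rw [this]; exact h2)
    rwa [coe_plusSub] at this
  have hminus : ⇑α '' minusPart α (V : Set G) = minusPart α (V : Set G) := by
    have hm' : ⇑α⁻¹ '' minusPart α (V : Set G) = minusPart α (V : Set G) := hminus'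
    conv_lhs => rw [← hm']
    rw [Set.image_image]
    have : (fun x => α (α⁻¹ x)) = id := by funext x; simp
    rw [this, Set.image_id]
  calc ⇑α '' (V : Set G) = ⇑α '' (plusPart α (V : Set G) * minusPart α (V : Set G)) := by
        rw [← ht.1]
    _ = (⇑α '' plusPart α (V : Set G)) * (⇑α '' minusPart α (V : Set G)) := Set.image_mul α
    _ = plusPart α (V : Set G) * minusPart α (V : Set G) := by rw [hplus, hminus]
    _ = V := (ht.1).symm

/-- The normal core of a tidy compact open subgroup is again compact, open and tidy. -/
lemma normalCore_tidy (α : MulAut G) (hαc : Continuous ⇑α) (hαc' : Continuous ⇑(α⁻¹))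
    (V : Subgroup G) (hVc : IsCompact (V : Set G)) (hVo : IsOpen (V : Set G))
    (ht : Tidy α (V : Set G)) :
    IsCompact ((V.normalCore : Subgroup G) : Set G) ∧
      IsOpen ((V.normalCore : Subgroup G) : Set G) ∧
      Tidy α ((V.normalCore : Subgroup G) : Set G) := by
  have hstable : ⇑α '' (V : Set G) = V := tidy_image_eq α hαc hαc' V hVc ht
  have hVmem : ∀ v, v ∈ V → α v ∈ V := by
    intro v hv
    have : α v ∈ ⇑α '' (V : Set G) := ⟨v, hv, rfl⟩
    rwa [hstable] at this
  have hVmem' : ∀ v, v ∈ V → α⁻¹ v ∈ V := by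
    intro v hv
    have hv' : v ∈ ⇑α '' (V : Set G) := by rw [hstable]; exact hv
    obtain ⟨w, hw, rfl⟩ := hv'
    rwa [MulAut.inv_apply_self]
  set N := V.normalCore with hNdef
  have hNmem : ∀ x, x ∈ N ↔ ∀ b : G, b * x * b⁻¹ ∈ V := fun x => Iff.rfl
  have hNst : ⇑α '' (N : Set G) = N := by
    apply Set.Subset.antisymm
    · rintro _ ⟨x, hx, rfl⟩
      refine (hNmem _).mpr fun b => ?_
      have h1 : (α⁻¹ b) * x * (α⁻¹ b)⁻¹ ∈ V := (hNmem x).mp hx (α⁻¹ b)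
      have h2 := hVmem _ h1
      simpa [map_mul, map_inv, MulAut.apply_inv_self] using h2
    · intro x hx
      refine ⟨α⁻¹ x, ?_, MulAut.apply_inv_self G α x⟩
      refine (hNmem _).mpr fun b => ?_
      have h1 : (α b) * x * (α b)⁻¹ ∈ V := (hNmem x).mp hx (α b)
      have h2 := hVmem' _ h1
      simpa [map_mul, map_inv, MulAut.inv_apply_self] using h2
  have hNst' : ⇑α⁻¹ '' (N : Set G) = N := by
    conv_lhs => rw [← hNst]
    rw [Set.image_image]
    have : (fun x => α⁻¹ (α x)) = id := by funext x; simp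
    rw [this, Set.image_id]
  have hNk : ∀ k : ℕ, ⇑(α ^ k) '' (N : Set G) = N := by
    intro k
    induction k with
    | zero => simp [Set.image_id']
      -- (α ^ 0) = 1
    | succ n ih => rw [mulAut_image_pow_succ', ih, hNst]
  have hNk' : ∀ k : ℕ, ⇑(α⁻¹ ^ k) '' (N : Set G) = N := by
    intro k
    induction k with
    | zero => simp [Set.image_id']
    | succ n ih => rw [mulAut_image_pow_succ', ih, hNst']
  have hplusN : plusPart α (N : Set G) = N := by
    rw [plusPart]
    simp only [hNk, Set.iInter_const]
  have hminusN : minusPart α (N : Set G) = N := by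
    rw [minusPart]
    simp only [hNk', Set.iInter_const]
  have hNcl : IsClosed (N : Set G) := Subgroup.normalCore_isClosed V hVc.isClosed
  haveI : Finite (G ⧸ V) := Subgroup.quotient_finite_of_isOpen V hVo
  haveI : V.FiniteIndex := Subgroup.finiteIndex_of_finite_quotient (H := V)
  haveI : N.FiniteIndex := Subgroup.finiteIndex_normalCore V
  have hNopen : IsOpen (N : Set G) := Subgroup.isOpen_of_isClosed_of_finiteIndex N hNcl
  refine ⟨hNcl.isCompact, hNopen, ?_, ?_⟩
  · -- tidy above
    rw [TidyAbove, hplusN, hminusN, coe_mul_coe]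
  · constructor
    · rw [hplusN]
      simp only [hNk, Set.iUnion_const]
      exact hNcl
    · rw [hminusN]
      simp only [hNk', Set.iUnion_const]
      exact hNcl

end Stable

section Con

variable [Group G] [TopologicalSpace G] [IsTopologicalGroup G] [T2Space G]
  [TotallyDisconnectedSpace G] [CompactSpace G]

/-- In a compact totally disconnected group, every neighborhood of `1` contains an
open normal subgroup. -/
lemma exists_openNormalSubgroup_sub {U : Set G} (hU : U ∈ 𝓝 (1 : G)) :
    ∃ N : OpenNormalSubgroup G, (N : Set G) ⊆ U := by
  obtain ⟨W, ⟨h1W, hWclopen⟩, hWU⟩ := (nhds_basis_clopen (1 : G)).mem_iff.mp hU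
  obtain ⟨N, hN⟩ :=
    IsTopologicalGroup.exist_openNormalSubgroup_sub_clopen_nhds_of_one hWclopen h1W
  exact ⟨N, hN.trans hWU⟩

lemma conSet_subgroup_normal (α : MulAut G) :
    ∃ C : Subgroup G, (C : Set G) = conSet α ∧ C.Normal := by
  refine ⟨{ carrier := conSet α
            one_mem' := ?_
            mul_mem' := ?_
            inv_mem' := ?_ }, rfl, ?_⟩
  · intro a b ha hb
    have ha' : Filter.Tendsto (fun n : ℕ => (α ^ n) a) Filter.atTop (𝓝 1) := ha
    have hb' : Filter.Tendsto (fun n : ℕ => (α ^ n) b) Filter.atTop (𝓝 1) := hb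
    show Filter.Tendsto (fun n : ℕ => (α ^ n) (a * b)) Filter.atTop (𝓝 1)
    simpa [map_mul] using ha'.mul hb'
  · show Filter.Tendsto (fun n : ℕ => (α ^ n) (1 : G)) Filter.atTop (𝓝 1)
    simpa [map_one] using (tendsto_const_nhds :
      Filter.Tendsto (fun _ : ℕ => (1 : G)) Filter.atTop (𝓝 1))
  · intro a ha
    have ha' : Filter.Tendsto (fun n : ℕ => (α ^ n) a) Filter.atTop (𝓝 1) := ha
    show Filter.Tendsto (fun n : ℕ => (α ^ n) a⁻¹) Filter.atTop (𝓝 1)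
    simpa [map_inv] using ha'.inv
  · constructor
    intro x hx g
    have hx' : Filter.Tendsto (fun n : ℕ => (α ^ n) x) Filter.atTop (𝓝 1) := hx
    show Filter.Tendsto (fun n : ℕ => (α ^ n) (g * x * g⁻¹)) Filter.atTop (𝓝 1)
    rw [Filter.tendsto_def]
    intro U hU
    obtain ⟨N, hNU⟩ := exists_openNormalSubgroup_sub hU
    have hNnhds : ((N : Subgroup G) : Set G) ∈ 𝓝 (1 : G) :=
      N.toOpenSubgroup.isOpen.mem_nhds (OneMemClass.one_mem N)
    have hev := hx' hNnhds
    filter_upwards [hev] with n hn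
    have : (α ^ n) (g * x * g⁻¹) = ((α ^ n) g) * ((α ^ n) x) * ((α ^ n) g)⁻¹ := by
      simp [map_mul, map_inv]
    rw [Set.mem_preimage, this]
    exact hNU (N.isNormal'.conj_mem _ hn _)

end Con

theorem con_bcg_nub_normal'
    [Group G] [TopologicalSpace G] [IsTopologicalGroup G] [T2Space G]
    [TotallyDisconnectedSpace G] [CompactSpace G]
    (α : MulAut G) (hαc : Continuous ⇑α) (hαc' : Continuous ⇑(α⁻¹)) :
    (∃ C : Subgroup G, (C : Set G) = conSet α ∧ C.Normal) ∧
    (∃ B : Subgroup G, (B : Set G) = bcgSet α ∧ B.Normal) ∧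
    (nub α).Normal := by
  obtain ⟨C₁, hC₁, hC₁n⟩ := conSet_subgroup_normal α
  obtain ⟨C₂, hC₂, hC₂n⟩ := conSet_subgroup_normal α⁻¹
  refine ⟨⟨C₁, hC₁, hC₁n⟩, ⟨C₁ ⊓ C₂, ?_, ?_⟩, ?_⟩
  · rw [Subgroup.coe_inf, hC₁, hC₂]; rfl
  · exact ⟨fun x hx g => ⟨hC₁n.conj_mem _ hx.1 g, hC₂n.conj_mem _ hx.2 g⟩⟩
  · constructor
    intro x hx g
    have hmem : ∀ z : G, z ∈ nub α ↔
        ∀ V : Subgroup G, IsCompact (V : Set G) → IsOpen (V : Set G) →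
          Tidy α (V : Set G) → z ∈ V := by
      intro z
      rw [nub]
      simp only [Subgroup.mem_iInf, Set.mem_setOf_eq]
      exact ⟨fun h V hc ho ht => h V ⟨hc, ho, ht⟩, fun h V hV => h V hV.1 hV.2.1 hV.2.2⟩
    rw [hmem]
    intro V hVc hVo hVt
    obtain ⟨hNc, hNo, hNt⟩ := normalCore_tidy α hαc hαc' V hVc hVo hVt
    have hxN : x ∈ V.normalCore := (hmem x).mp hx V.normalCore hNc hNo hNt
    exact V.normalCore_le ((Subgroup.normalCore_normal V).conj_mem x hxN g)


/-- For compact `G`, `con α`, `bcg α` and `nub α` are normal subgroups. -/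
theorem con_bcg_nub_normal
    [Group G] [TopologicalSpace G] [IsTopologicalGroup G] [T2Space G]
    [TotallyDisconnectedSpace G] [CompactSpace G]
    (α : MulAut G) (hαc : Continuous ⇑α) (hαc' : Continuous ⇑(α⁻¹)) :
    (∃ C : Subgroup G, (C : Set G) = conSet α ∧ C.Normal) ∧
    (∃ B : Subgroup G, (B : Set G) = bcgSet α ∧ B.Normal) ∧
    (nub α).Normal := by
  exact con_bcg_nub_normal' α hαc hαc'
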